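/- Under the core RCT assumptions (exchangeability, positivity, consistency) together with exposure necessity, no cross-infectivity, and the no-relative-effect-on-exposure assumption P(E^1 = 1) · P(E^0 = 2) = P(E^0 = 1) · P(E^1 = 2) (in place of the stronger assumption E^1 = E^0), and provided all conditioning events below have positive probability and all denominators are nonzero, the contrast conditional on subtype-specific exposure is identified: [P(Y^1 = 1 | E^1 = 1)/P(Y^0 = 1 | E^0 = 1)] / [P(Y^1 = 2 | E^1 = 2)/P(Y^0 = 2 | E^0 = 2)] = [P(Y = 1 | A = 1)/P(Y = 1 | A = 0)] / [P(Y = 2 | A = 1)/P(Y = 2 | A = 0)]. -/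

import Mathlib

open MeasureTheory

/-- `prR P B` is the probability `P(B)` as a real number. -/
noncomputable def prR {Ω : Type*} [MeasurableSpace Ω] (P : Measure Ω) (B : Set Ω) : ℝ :=
  (P B).toReal

/-- `cprR P B C` is the conditional probability `P(B | C) = P(B ∩ C) / P(C)`. -/
noncomputable def cprR {Ω : Type*} [MeasurableSpace Ω] (P : Measure Ω) (B C : Set Ω) : ℝ :=
  (P (B ∩ C)).toReal / (P C).toReal

/-- identification of the CCS under the weaker no-relative-effect-on-exposure
assumption `P(E^1 = 1)·P(E^0 = 2) = P(E^0 = 1)·P(E^1 = 2)` (in place of `E^1 = E^0`),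
together with exchangeability, positivity, consistency, exposure necessity, and
no cross-infectivity. -/
theorem stmt2
    {Ω : Type*} [MeasurableSpace Ω] (P : Measure Ω) [IsProbabilityMeasure P]
    (A : Ω → Fin 2) (E Y : Ω → Fin 3)
    (Ea Ya : Fin 2 → Ω → Fin 3)
    (hA : Measurable A) (hE : Measurable E) (hY : Measurable Y)
    (hEa : ∀ a, Measurable (Ea a)) (hYa : ∀ a, Measurable (Ya a))
    -- exchangeability: (Y^a, E^a) ⫫ A
    (exch : ∀ (a : Fin 2) (y e : Fin 3) (t : Fin 2),
      P ({ω | Ya a ω = y} ∩ {ω | Ea a ω = e} ∩ {ω | A ω = t})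
        = P ({ω | Ya a ω = y} ∩ {ω | Ea a ω = e}) * P {ω | A ω = t})
    -- positivity
    (pos : ∀ a : Fin 2, 0 < prR P {ω | A ω = a})
    -- consistency
    (cons : ∀ a : Fin 2, ∀ᵐ ω ∂P, A ω = a → Ea a ω = E ω ∧ Ya a ω = Y ω)
    -- exposure necessity
    (expnec : ∀ a : Fin 2, ∀ᵐ ω ∂P, Ea a ω = 0 → Ya a ω = 0)
    -- no cross-infectivity
    (nocross : ∀ a : Fin 2, ∀ᵐ ω ∂P, (Ea a ω = 1 → Ya a ω ≠ 2) ∧ (Ea a ω = 2 → Ya a ω ≠ 1))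
    -- no relative effect on exposure
    (ratioexp : prR P {ω | Ea 1 ω = 1} * prR P {ω | Ea 0 ω = 2}
      = prR P {ω | Ea 0 ω = 1} * prR P {ω | Ea 1 ω = 2})
    -- all conditioning events have positive probability
    (posE : ∀ (a : Fin 2) (j : Fin 3), j = 1 ∨ j = 2 → 0 < prR P {ω | Ea a ω = j})
    -- all denominators are nonzero
    (d1 : cprR P {ω | Ya 0 ω = 1} {ω | Ea 0 ω = 1} ≠ 0)
    (d2 : cprR P {ω | Ya 0 ω = 2} {ω | Ea 0 ω = 2} ≠ 0)
    (d3 : cprR P {ω | Ya 1 ω = 2} {ω | Ea 1 ω = 2} ≠ 0)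
    (d4 : cprR P {ω | Y ω = 1} {ω | A ω = 0} ≠ 0)
    (d5 : cprR P {ω | Y ω = 2} {ω | A ω = 0} ≠ 0)
    (d6 : cprR P {ω | Y ω = 2} {ω | A ω = 1} ≠ 0) :
    (cprR P {ω | Ya 1 ω = 1} {ω | Ea 1 ω = 1} / cprR P {ω | Ya 0 ω = 1} {ω | Ea 0 ω = 1})
        / (cprR P {ω | Ya 1 ω = 2} {ω | Ea 1 ω = 2} / cprR P {ω | Ya 0 ω = 2} {ω | Ea 0 ω = 2})
      = (cprR P {ω | Y ω = 1} {ω | A ω = 1} / cprR P {ω | Y ω = 1} {ω | A ω = 0})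
        / (cprR P {ω | Y ω = 2} {ω | A ω = 1} / cprR P {ω | Y ω = 2} {ω | A ω = 0}) := by
  have hfin3 : ∀ x : Fin 3, x = 0 ∨ x = 1 ∨ x = 2 := by decide
  have mYa : ∀ (a : Fin 2) (j : Fin 3), MeasurableSet {ω | Ya a ω = j} :=
    fun a j => (hYa a) (measurableSet_singleton j)
  have mEa : ∀ (a : Fin 2) (j : Fin 3), MeasurableSet {ω | Ea a ω = j} :=
    fun a j => (hEa a) (measurableSet_singleton j)
  have mA : ∀ (t : Fin 2), MeasurableSet {ω | A ω = t} :=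
    fun t => hA (measurableSet_singleton t)
  -- a.s., Ya = j → Ea = j for j = 1, 2
  have hsub : ∀ (a : Fin 2) (j : Fin 3), j = 1 ∨ j = 2 →
      ∀ᵐ ω ∂P, Ya a ω = j → Ea a ω = j := by
    intro a j hj
    filter_upwards [expnec a, nocross a] with ω h0 hc hy
    rcases hfin3 (Ea a ω) with he | he | he
    · rw [h0 he] at hy
      rcases hj with rfl | rfl <;> exact absurd hy (by decide)
    · rcases hj with rfl | rfl
      · exact he
      · exact absurd hy (hc.1 he)
    · rcases hj with rfl | rfl
      · exact absurd hy (hc.2 he)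
      · exact he
  have hYE : ∀ (a : Fin 2) (j : Fin 3), j = 1 ∨ j = 2 →
      P ({ω | Ya a ω = j} ∩ {ω | Ea a ω = j}) = P {ω | Ya a ω = j} := by
    intro a j hj
    apply measure_congr
    rw [Filter.eventuallyEq_set]
    filter_upwards [hsub a j hj] with ω h
    simp only [Set.mem_inter_iff, Set.mem_setOf_eq]
    exact ⟨fun h' => h'.1, fun h' => ⟨h', h h'⟩⟩
  -- P(Ya = y ∩ A = t) = P(Ya = y) P(A = t)
  have hB : ∀ (a : Fin 2) (y : Fin 3) (t : Fin 2),
      P ({ω | Ya a ω = y} ∩ {ω | A ω = t}) = P {ω | Ya a ω = y} * P {ω | A ω = t} := by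
    intro a y t
    have hdisj : Pairwise (Function.onFun Disjoint
        (fun e : Fin 3 => {ω | Ya a ω = y} ∩ {ω | Ea a ω = e} ∩ {ω | A ω = t})) := by
      intro i j hij
      simp only [Function.onFun, Set.disjoint_left, Set.mem_inter_iff, Set.mem_setOf_eq]
      rintro ω ⟨⟨-, hi⟩, -⟩ ⟨⟨-, hj⟩, -⟩
      exact hij (hi.symm.trans hj)
    have hdisj2 : Pairwise (Function.onFun Disjoint
        (fun e : Fin 3 => {ω | Ya a ω = y} ∩ {ω | Ea a ω = e})) := by
      intro i j hij
      simp only [Function.onFun, Set.disjoint_left, Set.mem_inter_iff, Set.mem_setOf_eq]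
      rintro ω ⟨-, hi⟩ ⟨-, hj⟩
      exact hij (hi.symm.trans hj)
    have h1 : {ω | Ya a ω = y} ∩ {ω | A ω = t}
        = ⋃ e : Fin 3, ({ω | Ya a ω = y} ∩ {ω | Ea a ω = e} ∩ {ω | A ω = t}) := by
      ext ω
      simp only [Set.mem_inter_iff, Set.mem_iUnion, Set.mem_setOf_eq]
      constructor
      · rintro ⟨hy, ht⟩; exact ⟨Ea a ω, ⟨hy, rfl⟩, ht⟩
      · rintro ⟨e, ⟨hy, -⟩, ht⟩; exact ⟨hy, ht⟩
    have h2 : {ω | Ya a ω = y}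
        = ⋃ e : Fin 3, ({ω | Ya a ω = y} ∩ {ω | Ea a ω = e}) := by
      ext ω
      simp only [Set.mem_iUnion, Set.mem_inter_iff, Set.mem_setOf_eq]
      constructor
      · intro hy; exact ⟨Ea a ω, hy, rfl⟩
      · rintro ⟨e, hy, -⟩; exact hy
    rw [h1, measure_iUnion hdisj (fun e => ((mYa a y).inter (mEa a e)).inter (mA t)),
      tsum_fintype]
    simp_rw [exch a y _ t]
    rw [← Finset.sum_mul, ← tsum_fintype (L := SummationFilter.unconditional _),
      ← measure_iUnion hdisj2 (fun e => (mYa a y).inter (mEa a e)), ← h2]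
  -- consistency: P(Y = j ∩ A = a) = P(Ya = j ∩ A = a)
  have hC : ∀ (a : Fin 2) (j : Fin 3),
      P ({ω | Y ω = j} ∩ {ω | A ω = a}) = P ({ω | Ya a ω = j} ∩ {ω | A ω = a}) := by
    intro a j
    apply measure_congr
    rw [Filter.eventuallyEq_set]
    filter_upwards [cons a] with ω h
    simp only [Set.mem_inter_iff, Set.mem_setOf_eq]
    constructor
    · rintro ⟨hy, ha⟩; exact ⟨(h ha).2.trans hy, ha⟩
    · rintro ⟨hy, ha⟩; exact ⟨(h ha).2.symm.trans hy, ha⟩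
  have hcprYA : ∀ (a : Fin 2) (j : Fin 3),
      cprR P {ω | Y ω = j} {ω | A ω = a} = prR P {ω | Ya a ω = j} := by
    intro a j
    unfold cprR prR
    have hA' : (P {ω | A ω = a}).toReal ≠ 0 := (pos a).ne'
    rw [hC a j, hB a j a, ENNReal.toReal_mul, mul_div_assoc, div_self hA', mul_one]
  have hcprYE : ∀ (a : Fin 2) (j : Fin 3), j = 1 ∨ j = 2 →
      cprR P {ω | Ya a ω = j} {ω | Ea a ω = j}
        = prR P {ω | Ya a ω = j} / prR P {ω | Ea a ω = j} := by
    intro a j hj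
    unfold cprR prR
    rw [hYE a j hj]
  rw [hcprYE 0 1 (Or.inl rfl)] at d1
  rw [hcprYE 0 2 (Or.inr rfl)] at d2
  rw [hcprYE 1 2 (Or.inr rfl)] at d3
  have hp01 : prR P {ω | Ya 0 ω = 1} ≠ 0 := fun h => d1 (by rw [h]; simp)
  have hp02 : prR P {ω | Ya 0 ω = 2} ≠ 0 := fun h => d2 (by rw [h]; simp)
  have hp12 : prR P {ω | Ya 1 ω = 2} ≠ 0 := fun h => d3 (by rw [h]; simp)
  have he11 : prR P {ω | Ea 1 ω = 1} ≠ 0 := (posE 1 1 (Or.inl rfl)).ne'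
  have he01 : prR P {ω | Ea 0 ω = 1} ≠ 0 := (posE 0 1 (Or.inl rfl)).ne'
  have he12 : prR P {ω | Ea 1 ω = 2} ≠ 0 := (posE 1 2 (Or.inr rfl)).ne'
  have he02 : prR P {ω | Ea 0 ω = 2} ≠ 0 := (posE 0 2 (Or.inr rfl)).ne'
  rw [hcprYA 1 1, hcprYA 0 1, hcprYA 1 2, hcprYA 0 2,
    hcprYE 1 1 (Or.inl rfl), hcprYE 0 1 (Or.inl rfl),
    hcprYE 1 2 (Or.inr rfl), hcprYE 0 2 (Or.inr rfl)]
  field_simp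
  linear_combination (-(prR P {ω | Ya 1 ω = 1})) * ratioexp
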